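/- Let A be a positive semidefinite n×n complex matrix and let θ ∈ [−1, 0). Then the infimum, over all n×n positive definite density matrices σ, of Tr(σ^θ A) equals (Tr[A^{1/(1−θ)}])^{1−θ}. (This reverse-Hölder variational formula is the core of the infimum in the Araki–Masuda norms for 1 ≤ p < 2, as used in Lemma 2.3 of the paper.) -/

import Mathlib

open Matrix
open scoped ComplexOrder

/-- Real power of a matrix, defined via the spectral decomposition when the matrix is
Hermitian (applying the real power function to the eigenvalues), and `0` otherwise. -/
noncomputable def mpow {n : ℕ} (A : Matrix (Fin n) (Fin n) ℂ) (r : ℝ) :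
    Matrix (Fin n) (Fin n) ℂ :=
  if hA : A.IsHermitian then
    (hA.eigenvectorUnitary : Matrix (Fin n) (Fin n) ℂ) *
      Matrix.diagonal (fun i => ((hA.eigenvalues i ^ r : ℝ) : ℂ)) *
      (star hA.eigenvectorUnitary : Matrix (Fin n) (Fin n) ℂ)
  else 0

namespace HolderVarAux

lemma continuousOn_of_finite {s : Set ℝ} (hs : s.Finite) (f : ℝ → ℝ) : ContinuousOn f s := by
  rw [continuousOn_iff_continuous_restrict]
  have : Finite s := hs
  exact continuous_of_discreteTopology

lemma mpow_eq_cfc {n : ℕ} {A : Matrix (Fin n) (Fin n) ℂ} (hA : A.IsHermitian) (r : ℝ) :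
    mpow A r = cfc (fun x : ℝ => x ^ r) A := by
  rw [hA.cfc_eq]
  unfold mpow
  rw [dif_pos hA]
  rfl

lemma trace_diag_conj_mul {n : ℕ} (U : Matrix (Fin n) (Fin n) ℂ)
    (v : Fin n → ℂ) (A : Matrix (Fin n) (Fin n) ℂ) :
    (U * Matrix.diagonal v * star U * A).trace = ∑ j, v j * (star U * A * U) j j := by
  have h1 : U * Matrix.diagonal v * star U * A = U * (Matrix.diagonal v * (star U * A)) := by
    noncomm_ring
  rw [h1, Matrix.trace_mul_comm]
  have h2 : Matrix.diagonal v * (star U * A) * U = Matrix.diagonal v * (star U * A * U) := by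
    noncomm_ring
  rw [h2, Matrix.trace]
  simp [Matrix.diag, Matrix.diagonal_mul]

lemma trace_conj_diag {n : ℕ} {U : Matrix (Fin n) (Fin n) ℂ} (hU : star U * U = 1)
    (v : Fin n → ℂ) : (U * Matrix.diagonal v * star U).trace = ∑ j, v j := by
  rw [Matrix.trace_mul_comm, ← mul_assoc, hU, one_mul, Matrix.trace_diagonal]

lemma posDef_conj {n : ℕ} {U : Matrix (Fin n) (Fin n) ℂ}
    (hU : U ∈ Matrix.unitaryGroup (Fin n) ℂ) {D : Matrix (Fin n) (Fin n) ℂ} (hD : D.PosDef) :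
    (U * D * star U).PosDef := by
  have hUU : U * star U = 1 := (Matrix.mem_unitaryGroup_iff).mp hU
  refine Matrix.posDef_iff_dotProduct_mulVec.mpr ⟨?_, ?_⟩
  · have h1 : D.IsHermitian := hD.1
    show (U * D * star U)ᴴ = _
    rw [Matrix.conjTranspose_mul, Matrix.conjTranspose_mul]
    rw [Matrix.star_eq_conjTranspose, Matrix.conjTranspose_conjTranspose, h1.eq]
    noncomm_ring
  · intro x hx
    have hy : star U *ᵥ x ≠ 0 := by
      intro h
      apply hx
      have : U *ᵥ (star U *ᵥ x) = x := by
        rw [Matrix.mulVec_mulVec, hUU, Matrix.one_mulVec]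
      rw [← this, h, Matrix.mulVec_zero]
    have key : dotProduct (star x) ((U * D * star U) *ᵥ x)
        = dotProduct (star (star U *ᵥ x)) (D *ᵥ (star U *ᵥ x)) := by
      rw [Matrix.star_mulVec, Matrix.star_eq_conjTranspose, Matrix.conjTranspose_conjTranspose,
        ← Matrix.mulVec_mulVec, ← Matrix.mulVec_mulVec, Matrix.dotProduct_mulVec (star x)]
    rw [key]
    exact hD.dotProduct_mulVec_pos hy

lemma row_sum_normSq {n : ℕ} {X : Matrix (Fin n) (Fin n) ℂ} (h : X * star X = 1) (i : Fin n) :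
    ∑ j, Complex.normSq (X i j) = 1 := by
  have h0 : (X * star X) i i = 1 := by rw [h, Matrix.one_apply_eq]
  rw [Matrix.mul_apply] at h0
  have h1 : ∀ j, X i j * (star X) j i = ((Complex.normSq (X i j) : ℝ) : ℂ) := by
    intro j
    rw [Matrix.star_apply, Complex.star_def, Complex.mul_conj]
  rw [Finset.sum_congr rfl (fun j _ => h1 j), ← Complex.ofReal_sum] at h0
  exact_mod_cast h0

lemma col_sum_normSq {n : ℕ} {X : Matrix (Fin n) (Fin n) ℂ} (h : star X * X = 1) (j : Fin n) :
    ∑ i, Complex.normSq (X i j) = 1 := by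
  have h0 : (star X * X) j j = 1 := by rw [h, Matrix.one_apply_eq]
  rw [Matrix.mul_apply] at h0
  have h1 : ∀ i, (star X) j i * X i j = ((Complex.normSq (X i j) : ℝ) : ℂ) := by
    intro i
    rw [Matrix.star_apply, Complex.star_def, mul_comm, Complex.mul_conj]
  rw [Finset.sum_congr rfl (fun i _ => h1 i), ← Complex.ofReal_sum] at h0
  exact_mod_cast h0

open Finset in
lemma key_ineq {n : ℕ} {θ : ℝ} (hθ₂ : θ < 0)
    (a s : Fin n → ℝ) (c : Fin n → Fin n → ℝ)
    (ha : ∀ i, 0 ≤ a i) (hs : ∀ j, 0 < s j)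
    (hc : ∀ i j, 0 ≤ c i j)
    (hrow : ∀ i, ∑ j, c i j = 1) (hcol : ∀ j, ∑ i, c i j = 1)
    (hsum : ∑ j, s j = 1) :
    (∑ i, a i ^ (1/(1-θ))) ^ (1-θ) ≤ ∑ i, ∑ j, a i * c i j * s j ^ θ := by
  set p : ℝ := 1 - θ with hp
  have hp1 : 1 < p := by simp [hp]; linarith
  have hp0 : (0:ℝ) < p := by linarith
  have hpq : p.HolderConjugate (p / (p - 1)) := Real.HolderConjugate.conjExponent hp1
  set q : ℝ := p / (p - 1) with hq
  have hq0 : (0:ℝ) < q := hpq.symm.pos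
  have hiq : 1 / q = (p - 1) / p := one_div_div _ _
  have hexp : θ * (1/p) + 1/q = 0 := by
    rw [hiq]
    field_simp
    simp [hp]
  set F : Fin n × Fin n → ℝ := fun x => (a x.1 * c x.1 x.2 * s x.2 ^ θ) ^ (1/p) with hF
  set G : Fin n × Fin n → ℝ := fun x => (c x.1 x.2 * s x.2) ^ (1/q) with hG
  have hFnn : ∀ x : Fin n × Fin n, 0 ≤ F x := fun x => Real.rpow_nonneg
    (mul_nonneg (mul_nonneg (ha _) (hc _ _)) (Real.rpow_nonneg (hs _).le _)) _
  have hGnn : ∀ x : Fin n × Fin n, 0 ≤ G x := fun x => Real.rpow_nonneg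
    (mul_nonneg (hc _ _) (hs _).le) _
  have hFG : ∀ x : Fin n × Fin n, F x * G x = c x.1 x.2 * a x.1 ^ (1/p) := by
    intro ⟨i, j⟩
    show (a i * c i j * s j ^ θ) ^ (1/p) * (c i j * s j) ^ (1/q) = c i j * a i ^ (1/p)
    rw [Real.mul_rpow (mul_nonneg (ha i) (hc i j)) (Real.rpow_nonneg (hs j).le _),
        Real.mul_rpow (ha i) (hc i j),
        Real.mul_rpow (hc i j) (hs j).le,
        ← Real.rpow_mul (hs j).le]
    have hcc : c i j ^ (1/p) * c i j ^ (1/q) = c i j := by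
      rw [← Real.rpow_add' (hc i j) (by rw [one_div, one_div, hpq.inv_add_inv_eq_one]; norm_num)]
      rw [one_div, one_div, hpq.inv_add_inv_eq_one, Real.rpow_one]
    have hss : s j ^ (θ * (1/p)) * s j ^ (1/q) = 1 := by
      rw [← Real.rpow_add (hs j), hexp, Real.rpow_zero]
    calc a i ^ (1/p) * c i j ^ (1/p) * s j ^ (θ * (1/p)) * (c i j ^ (1/q) * s j ^ (1/q))
        = (c i j ^ (1/p) * c i j ^ (1/q)) * (s j ^ (θ * (1/p)) * s j ^ (1/q)) * a i ^ (1/p) := by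
          ring
      _ = c i j * a i ^ (1/p) := by rw [hcc, hss]; ring
  have hsumFG : ∑ x : Fin n × Fin n, F x * G x = ∑ i, a i ^ (1/p) := by
    rw [Fintype.sum_prod_type]
    simp only [hFG]
    rw [Finset.sum_comm]
    calc ∑ j, ∑ i, c i j * a i ^ (1/p) = ∑ i, (∑ j, c i j) * a i ^ (1/p) := by
          rw [Finset.sum_comm]; simp [Finset.sum_mul]
      _ = _ := by simp [hrow]
  have hsumFp : ∑ x : Fin n × Fin n, F x ^ p = ∑ i, ∑ j, a i * c i j * s j ^ θ := by
    have hh : ∀ x : Fin n × Fin n, F x ^ p = a x.1 * c x.1 x.2 * s x.2 ^ θ := by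
      intro x
      rw [hF, ← Real.rpow_mul (mul_nonneg (mul_nonneg (ha _) (hc _ _))
        (Real.rpow_nonneg (hs _).le _)), one_div_mul_cancel hp0.ne', Real.rpow_one]
    simp only [hh, Fintype.sum_prod_type]
  have hsumGq : ∑ x : Fin n × Fin n, G x ^ q = 1 := by
    have hh : ∀ x : Fin n × Fin n, G x ^ q = c x.1 x.2 * s x.2 := by
      intro x
      rw [hG, ← Real.rpow_mul (mul_nonneg (hc _ _) (hs _).le),
        one_div_mul_cancel hq0.ne', Real.rpow_one]
    simp only [hh, Fintype.sum_prod_type]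
    rw [Finset.sum_comm]
    calc ∑ j, ∑ i, c i j * s j = ∑ j, (∑ i, c i j) * s j := by simp [Finset.sum_mul]
      _ = 1 := by simp [hcol, hsum]
  have hR : (0:ℝ) ≤ ∑ i, ∑ j, a i * c i j * s j ^ θ :=
    Finset.sum_nonneg fun i _ => Finset.sum_nonneg fun j _ =>
      mul_nonneg (mul_nonneg (ha i) (hc i j)) (Real.rpow_nonneg (hs j).le θ)
  have hT : (0:ℝ) ≤ ∑ i, a i ^ (1/p) := Finset.sum_nonneg fun i _ => Real.rpow_nonneg (ha i) _
  have holder := Real.inner_le_Lp_mul_Lq_of_nonneg (s := Finset.univ) hpq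
    (fun x _ => hFnn x) (fun x _ => hGnn x)
  rw [hsumFG, hsumFp, hsumGq, Real.one_rpow, mul_one] at holder
  have hfin := Real.rpow_le_rpow hT holder hp0.le
  rwa [← Real.rpow_mul hR, one_div_mul_cancel hp0.ne', Real.rpow_one] at hfin

lemma expansion {n : ℕ} {σ A : Matrix (Fin n) (Fin n) ℂ} (hσ : σ.PosDef) (hA : A.PosSemidef)
    (θ : ℝ) :
    (Matrix.trace (mpow σ θ * A)).re
      = ∑ i, ∑ j, hA.1.eigenvalues i *
          Complex.normSq ((star (hA.1.eigenvectorUnitary : Matrix (Fin n) (Fin n) ℂ) *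
            (hσ.1.eigenvectorUnitary : Matrix (Fin n) (Fin n) ℂ)) i j) * hσ.1.eigenvalues j ^ θ := by
  set W : Matrix (Fin n) (Fin n) ℂ := (hA.1.eigenvectorUnitary : Matrix (Fin n) (Fin n) ℂ) with hW
  set U : Matrix (Fin n) (Fin n) ℂ := (hσ.1.eigenvectorUnitary : Matrix (Fin n) (Fin n) ℂ) with hU
  set X : Matrix (Fin n) (Fin n) ℂ := star W * U with hX
  set a : Fin n → ℝ := hA.1.eigenvalues with haa
  set s : Fin n → ℝ := hσ.1.eigenvalues with hss
  have hB : ∀ j, (star U * A * U) j j = ((∑ i, a i * Complex.normSq (X i j) : ℝ) : ℂ) := by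
    intro j
    have hspec : A = W * Matrix.diagonal (Complex.ofReal ∘ a) * star W := by
      conv_lhs => rw [hA.1.spectral_theorem]
      rfl
    have hA' : star U * A * U = star X * Matrix.diagonal (Complex.ofReal ∘ a) * X := by
      rw [hspec, hX, StarMul.star_mul, star_star]
      noncomm_ring
    rw [hA']
    rw [show star X * Matrix.diagonal (Complex.ofReal ∘ a) * X
        = star X * (Matrix.diagonal (Complex.ofReal ∘ a) * X) by noncomm_ring]
    rw [Matrix.mul_apply, Complex.ofReal_sum]
    congr 1; ext i
    rw [Matrix.diagonal_mul, Matrix.star_apply]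
    simp only [Function.comp_apply, Complex.star_def]
    rw [show (starRingEnd ℂ) (X i j) * ((a i : ℂ) * X i j)
        = (a i : ℂ) * (X i j * (starRingEnd ℂ) (X i j)) by ring, Complex.mul_conj]
    push_cast
    ring
  have htr : (mpow σ θ * A).trace = ∑ j, ((s j ^ θ : ℝ) : ℂ) * (star U * A * U) j j := by
    unfold mpow
    rw [dif_pos hσ.1]
    exact trace_diag_conj_mul U _ A
  rw [htr, Complex.re_sum, Finset.sum_comm]
  congr 1; ext j
  rw [hB j, ← Complex.ofReal_mul, Complex.ofReal_re, Finset.mul_sum]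
  congr 1; ext i
  ring

end HolderVarAux

open HolderVarAux in
theorem holder_variational_inf {n : ℕ}
    (A : Matrix (Fin n) (Fin n) ℂ) (hA : A.PosSemidef)
    (θ : ℝ) (hθ₁ : -1 ≤ θ) (hθ₂ : θ < 0) :
    sInf {x : ℝ | ∃ σ : Matrix (Fin n) (Fin n) ℂ, σ.PosDef ∧ σ.trace = 1 ∧
        x = (Matrix.trace (mpow σ θ * A)).re} =
      ((Matrix.trace (mpow A (1 / (1 - θ)))).re) ^ (1 - θ) := by
  set S : Set ℝ := {x : ℝ | ∃ σ : Matrix (Fin n) (Fin n) ℂ, σ.PosDef ∧ σ.trace = 1 ∧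
      x = (Matrix.trace (mpow σ θ * A)).re} with hS
  have hp0 : (0:ℝ) < 1 - θ := by linarith
  rcases Nat.eq_zero_or_pos n with hn | hn
  · -- n = 0 : the set is empty and both sides are 0
    subst hn
    have hempty : S = ∅ := by
      ext x
      simp only [hS, Set.mem_setOf_eq, Set.mem_empty_iff_false, iff_false]
      rintro ⟨σ, hσ, hσt, rfl⟩
      have : σ.trace = 0 := by
        simp [Matrix.trace]
      rw [this] at hσt
      exact zero_ne_one hσt
    rw [hempty, Real.sInf_empty]
    have : (mpow A (1 / (1 - θ))).trace = 0 := by simp [Matrix.trace]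
    rw [this]
    simp [Real.zero_rpow hp0.ne']
  -- main case : n ≥ 1
  have hA1 : A.IsHermitian := hA.1
  set a : Fin n → ℝ := hA1.eigenvalues with haa
  have ha : ∀ i, 0 ≤ a i := hA.eigenvalues_nonneg
  set W : Matrix (Fin n) (Fin n) ℂ := (hA1.eigenvectorUnitary : Matrix (Fin n) (Fin n) ℂ) with hW
  have hWmem : W ∈ Matrix.unitaryGroup (Fin n) ℂ := hA1.eigenvectorUnitary.2
  have hWW : star W * W = 1 := (Matrix.mem_unitaryGroup_iff').mp hWmem
  have hWW' : W * star W = 1 := (Matrix.mem_unitaryGroup_iff).mp hWmem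
  set p : ℝ := 1 - θ with hp
  set T : ℝ := ∑ i, a i ^ (1/p) with hT
  have hTnn : 0 ≤ T := Finset.sum_nonneg fun i _ => Real.rpow_nonneg (ha i) _
  -- RHS is T ^ p
  have hRHS : (Matrix.trace (mpow A (1 / (1 - θ)))).re = T := by
    unfold mpow
    rw [dif_pos hA1]
    rw [trace_conj_diag hWW, Complex.re_sum]
    simp [hT]
    rfl
  rw [hRHS]
  -- lower bound : every element of S is at least T ^ p
  have hlb : ∀ x ∈ S, T ^ p ≤ x := by
    rintro x ⟨σ, hσ, hσt, rfl⟩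
    rw [expansion hσ hA θ]
    set s : Fin n → ℝ := hσ.1.eigenvalues with hss
    set U : Matrix (Fin n) (Fin n) ℂ := (hσ.1.eigenvectorUnitary : Matrix (Fin n) (Fin n) ℂ)
      with hU
    have hUmem : U ∈ Matrix.unitaryGroup (Fin n) ℂ := hσ.1.eigenvectorUnitary.2
    have hUU : star U * U = 1 := (Matrix.mem_unitaryGroup_iff').mp hUmem
    have hUU' : U * star U = 1 := (Matrix.mem_unitaryGroup_iff).mp hUmem
    set X : Matrix (Fin n) (Fin n) ℂ := star W * U with hXdef
    have hXr : X * star X = 1 := by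
      rw [hXdef, StarMul.star_mul, star_star]
      calc star W * U * (star U * W) = star W * (U * star U) * W := by noncomm_ring
        _ = 1 := by rw [hUU', mul_one, hWW]
    have hXc : star X * X = 1 := by
      rw [hXdef, StarMul.star_mul, star_star]
      calc star U * W * (star W * U) = star U * (W * star W) * U := by noncomm_ring
        _ = 1 := by rw [hWW', mul_one, hUU]
    have hs : ∀ j, 0 < s j := fun j => hσ.eigenvalues_pos j
    have hsum : ∑ j, s j = 1 := by
      have htrσ : σ.trace = ∑ j, ((s j : ℝ) : ℂ) := by
        conv_lhs => rw [hσ.1.spectral_theorem]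
        exact trace_conj_diag hUU _
      rw [htrσ, ← Complex.ofReal_sum] at hσt
      exact_mod_cast hσt
    exact key_ineq hθ₂ a s (fun i j => Complex.normSq (X i j)) ha hs
      (fun i j => Complex.normSq_nonneg _)
      (fun i => row_sum_normSq hXr i) (fun j => col_sum_normSq hXc j) hsum
  -- members of S coming from functions of A
  have hmem : ∀ ε : ℝ, 0 < ε →
      (∑ i, a i * ((a i ^ (1/p) + ε) / (T + n * ε)) ^ θ) ∈ S ∧
      (∑ i, a i * ((a i ^ (1/p) + ε) / (T + n * ε)) ^ θ) ≤ T * (T + n * ε) ^ (-θ) := by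
    intro ε hε
    set Tε : ℝ := T + n * ε with hTε
    have hTε0 : 0 < Tε := by
      have : (0:ℝ) < n * ε := by positivity
      linarith
    set g : ℝ → ℝ := fun x => (x ^ (1/p) + ε) / Tε with hg
    have hgpos : ∀ x : ℝ, 0 ≤ x → 0 < g x := by
      intro x hx
      have : 0 < x ^ (1/p) + ε := by
        have := Real.rpow_nonneg hx (1/p)
        linarith
      positivity
    set σ : Matrix (Fin n) (Fin n) ℂ := cfc g A with hσdef
    have hσconc : σ = W * Matrix.diagonal (fun i => ((g (a i) : ℝ) : ℂ)) * star W := by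
      rw [hσdef, hA1.cfc_eq]
      rfl
    have hσpd : σ.PosDef := by
      rw [hσconc]
      exact posDef_conj hWmem (Matrix.PosDef.diagonal fun i =>
        Complex.zero_lt_real.mpr (hgpos _ (ha i)))
    have hσtr : σ.trace = 1 := by
      rw [hσconc, trace_conj_diag hWW, ← Complex.ofReal_sum]
      have : ∑ i, g (a i) = 1 := by
        rw [hg]
        simp only []
        rw [← Finset.sum_div]
        rw [Finset.sum_add_distrib]
        simp [hT, hTε, Finset.card_univ]
        field_simp
        exact hTε0.ne'
      rw [this, Complex.ofReal_one]
    have hσh : σ.IsHermitian := hσpd.1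
    have hsa : IsSelfAdjoint A := hA1.isSelfAdjoint
    have hcont1 : ContinuousOn (fun x : ℝ => x ^ θ) (g '' spectrum ℝ A) :=
      continuousOn_of_finite ((Matrix.finite_real_spectrum (A := A)).image g) _
    have hcont2 : ContinuousOn g (spectrum ℝ A) :=
      continuousOn_of_finite (Matrix.finite_real_spectrum (A := A)) _
    have hcomp : mpow σ θ = cfc (fun x : ℝ => g x ^ θ) A := by
      rw [mpow_eq_cfc hσh θ, hσdef, ← cfc_comp (fun x : ℝ => x ^ θ) g A hsa hcont1 hcont2]
      rfl
    have htrval : (Matrix.trace (mpow σ θ * A)).re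
        = ∑ i, a i * ((a i ^ (1/p) + ε) / Tε) ^ θ := by
      rw [hcomp, hA1.cfc_eq]
      show ((W * Matrix.diagonal (fun i => ((g (a i) ^ θ : ℝ) : ℂ)) * star W * A).trace).re = _
      rw [trace_diag_conj_mul, (by have h := hA1.conjStarAlgAut_star_eigenvectorUnitary; simpa [Unitary.conjStarAlgAut_apply] using h :
        star W * A * W = Matrix.diagonal (RCLike.ofReal ∘ hA1.eigenvalues))]
      rw [Complex.re_sum]
      congr 1; ext i
      rw [Matrix.diagonal_apply_eq]
      show (((g (a i) ^ θ : ℝ) : ℂ) * ((a i : ℝ) : ℂ)).re = _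
      rw [← Complex.ofReal_mul, Complex.ofReal_re]
      simp only [hg]
      ring
    refine ⟨⟨σ, hσpd, hσtr, htrval.symm⟩, ?_⟩
    have hperterm : ∀ i : Fin n, a i * ((a i ^ (1/p) + ε) / Tε) ^ θ ≤ a i ^ (1/p) * Tε ^ (-θ) := by
      intro i
      rcases eq_or_lt_of_le (ha i) with h0 | hai
      · rw [← h0, Real.zero_rpow (one_div_ne_zero hp0.ne'), zero_mul, zero_mul]
      · have h1 : 0 < a i ^ (1/p) := Real.rpow_pos_of_pos hai _
        have hdivpos : 0 < a i ^ (1/p) / Tε := div_pos h1 hTε0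
        have hle : a i ^ (1/p) / Tε ≤ (a i ^ (1/p) + ε) / Tε := by gcongr; linarith
        have h2 : ((a i ^ (1/p) + ε) / Tε) ^ θ ≤ (a i ^ (1/p) / Tε) ^ θ :=
          Real.rpow_le_rpow_of_nonpos hdivpos hle hθ₂.le
        calc a i * ((a i ^ (1/p) + ε) / Tε) ^ θ ≤ a i * (a i ^ (1/p) / Tε) ^ θ :=
              mul_le_mul_of_nonneg_left h2 (ha i)
          _ = a i ^ (1/p) * Tε ^ (-θ) := by
              rw [Real.div_rpow h1.le hTε0.le, Real.rpow_neg hTε0.le, div_eq_mul_inv,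
                ← Real.rpow_mul (ha i)]
              rw [show a i * (a i ^ (1/p * θ) * (Tε ^ θ)⁻¹)
                  = (a i * a i ^ (1/p * θ)) * (Tε ^ θ)⁻¹ by ring]
              congr 1
              rw [show a i * a i ^ (1/p * θ) = a i ^ ((1:ℝ) + 1/p * θ) by
                rw [Real.rpow_add hai, Real.rpow_one]]
              congr 1
              field_simp
              rw [hp]; ring
    calc (∑ i, a i * ((a i ^ (1/p) + ε) / Tε) ^ θ)
        ≤ ∑ i, a i ^ (1/p) * Tε ^ (-θ) := Finset.sum_le_sum (fun i _ => hperterm i)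
      _ = T * Tε ^ (-θ) := by rw [← Finset.sum_mul]
  -- assemble
  have hne : S.Nonempty := ⟨_, (hmem 1 one_pos).1⟩
  have hbdd : BddBelow S := ⟨T ^ p, fun x hx => hlb x hx⟩
  apply le_antisymm
  · have htend : Filter.Tendsto (fun ε : ℝ => T * (T + n * ε) ^ (-θ))
        (nhdsWithin 0 (Set.Ioi 0)) (nhds (T ^ p)) := by
      have h1 : Filter.Tendsto (fun ε : ℝ => T + (n : ℝ) * ε) (nhds 0) (nhds T) := by
        have hcontf : Continuous (fun ε : ℝ => T + (n : ℝ) * ε) := by continuity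
        simpa using hcontf.tendsto 0
      have h2 : Filter.Tendsto (fun y : ℝ => T * y ^ (-θ)) (nhds T) (nhds (T * T ^ (-θ))) :=
        (Real.continuousAt_rpow_const T (-θ) (Or.inr (by linarith))).const_mul T
      have h3 := h2.comp h1
      have h4 := Real.rpow_add' (x := T) (y := 1) (z := -θ) hTnn (by
        intro hcon; linarith [hcon])
      rw [Real.rpow_one] at h4
      have hval : T * T ^ (-θ) = T ^ p := by
        rw [← h4]
        congr 1
      rw [hval] at h3
      exact h3.mono_left nhdsWithin_le_nhds
    refine ge_of_tendsto htend ?_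
    filter_upwards [eventually_mem_nhdsWithin] with ε hε
    exact (csInf_le hbdd (hmem ε hε).1).trans (hmem ε hε).2
  · exact le_csInf hne hlb
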